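/- Let U be a finite set of K UEs and B a finite set of L BSs, with path-loss coefficients q_{lk} > 0 for each BS l and UE k, transmit power P > 0 and noise power N0 > 0. For every M ≥ 1: for every decomposition of the network into M+1 disjoint subnetworks (i.e., a partition of U into M+1 sets U_1,…,U_{M+1} and a partition of B into M+1 sets B_1,…,B_{M+1}), there exists a decomposition into M disjoint subnetworks (a partition of U into M sets and of B into M sets) whose sum capacity Σ_{m=1}^{M} C_sub(B_m, U_m) is at least Σ_{m=1}^{M+1} C_sub(B_m, U_m). Consequently, the maximum achievable sum capacity over decompositions into M+1 subnetworks is no larger than the maximum over decompositions into M subnetworks. -/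
import Mathlib


open Finset

/-- Ergodic capacity of the subnetwork consisting of BSs `Bm` and UEs `Um`,
within the whole network whose UE set is `U`. -/
noncomputable def Csub {ιU ιB : Type*} [DecidableEq ιU]
    (U : Finset ιU) (q : ιB → ιU → ℝ) (P N0 : ℝ)
    (Bm : Finset ιB) (Um : Finset ιU) : ℝ :=
  ∑ l ∈ Bm, Real.logb 2
    (1 + P * (∑ k ∈ Um, q l k ^ 2) / (N0 + P * ∑ k ∈ U \ Um, q l k ^ 2))

/-- A decomposition of the network into `M` disjoint subnetworks: a partition of the
UE set `U` into `M` pairwise disjoint sets whose union is `U`, together with a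
partition of the BS set `B` into `M` pairwise disjoint sets whose union is `B`. -/
def IsDecomp {ιU ιB : Type*} [DecidableEq ιU] [DecidableEq ιB]
    (U : Finset ιU) (B : Finset ιB) {M : ℕ}
    (UF : Fin M → Finset ιU) (BF : Fin M → Finset ιB) : Prop :=
  (∀ i j, i ≠ j → Disjoint (UF i) (UF j)) ∧ Finset.univ.biUnion UF = U ∧
    (∀ i j, i ≠ j → Disjoint (BF i) (BF j)) ∧ Finset.univ.biUnion BF = B

section Helpers

set_option linter.unusedSectionVars false

variable {ιU ιB : Type*} [DecidableEq ιU] [DecidableEq ιB]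
  {U : Finset ιU} {q : ιB → ιU → ℝ} {P N0 : ℝ}

lemma denom_pos (hP : 0 < P) (hN0 : 0 < N0) (l : ιB) (s : Finset ιU) :
    0 < N0 + P * ∑ k ∈ s, q l k ^ 2 := by positivity

lemma arg_ge_one (hP : 0 < P) (hN0 : 0 < N0) (l : ιB) (Um : Finset ιU) :
    1 ≤ 1 + P * (∑ k ∈ Um, q l k ^ 2) / (N0 + P * ∑ k ∈ U \ Um, q l k ^ 2) := by
  have h := denom_pos (q := q) hP hN0 l (U \ Um)
  have : 0 ≤ P * (∑ k ∈ Um, q l k ^ 2) / (N0 + P * ∑ k ∈ U \ Um, q l k ^ 2) := by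
    positivity
  linarith

lemma csub_nonneg (hP : 0 < P) (hN0 : 0 < N0) (Bm : Finset ιB) (Um : Finset ιU) :
    0 ≤ Csub U q P N0 Bm Um := by
  refine Finset.sum_nonneg fun l _ => Real.logb_nonneg one_lt_two ?_
  exact arg_ge_one hP hN0 l Um

lemma csub_mono_U (hP : 0 < P) (hN0 : 0 < N0) (Bm : Finset ιB) {Um Um' : Finset ιU}
    (h : Um ⊆ Um') : Csub U q P N0 Bm Um ≤ Csub U q P N0 Bm Um' := by
  refine Finset.sum_le_sum fun l _ => ?_
  refine Real.logb_le_logb_of_le one_lt_two ?_ ?_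
  · linarith [arg_ge_one (U := U) (q := q) hP hN0 l Um]
  · have h1 : (∑ k ∈ Um, q l k ^ 2) ≤ ∑ k ∈ Um', q l k ^ 2 :=
      Finset.sum_le_sum_of_subset_of_nonneg h (fun k _ _ => by positivity)
    have h2 : (∑ k ∈ U \ Um', q l k ^ 2) ≤ ∑ k ∈ U \ Um, q l k ^ 2 :=
      Finset.sum_le_sum_of_subset_of_nonneg (Finset.sdiff_subset_sdiff (le_refl U) h)
        (fun k _ _ => by positivity)
    have hd1 := denom_pos (q := q) hP hN0 l (U \ Um)
    have hd2 := denom_pos (q := q) hP hN0 l (U \ Um')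
    have : P * (∑ k ∈ Um, q l k ^ 2) / (N0 + P * ∑ k ∈ U \ Um, q l k ^ 2)
        ≤ P * (∑ k ∈ Um', q l k ^ 2) / (N0 + P * ∑ k ∈ U \ Um', q l k ^ 2) :=
      div_le_div₀ (by positivity) (by nlinarith) hd2 (by nlinarith)
    linarith

lemma csub_union_B (Um : Finset ιU) {B1 B2 : Finset ιB} (h : Disjoint B1 B2) :
    Csub U q P N0 (B1 ∪ B2) Um = Csub U q P N0 B1 Um + Csub U q P N0 B2 Um :=
  Finset.sum_union h

lemma csub_le_bound (hP : 0 < P) (hN0 : 0 < N0) (Bm : Finset ιB) {Um : Finset ιU}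
    (h : Um ⊆ U) :
    Csub U q P N0 Bm Um ≤ ∑ l ∈ Bm, Real.logb 2 (1 + P * (∑ k ∈ U, q l k ^ 2) / N0) := by
  refine Finset.sum_le_sum fun l _ => ?_
  refine Real.logb_le_logb_of_le one_lt_two ?_ ?_
  · linarith [arg_ge_one (U := U) (q := q) hP hN0 l Um]
  · have h1 : (∑ k ∈ Um, q l k ^ 2) ≤ ∑ k ∈ U, q l k ^ 2 :=
      Finset.sum_le_sum_of_subset_of_nonneg h (fun k _ _ => by positivity)
    have hd1 := denom_pos (q := q) hP hN0 l (U \ Um)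
    have : P * (∑ k ∈ Um, q l k ^ 2) / (N0 + P * ∑ k ∈ U \ Um, q l k ^ 2)
        ≤ P * (∑ k ∈ U, q l k ^ 2) / N0 := by
      refine div_le_div₀ (by positivity) (by nlinarith) hN0 ?_
      nlinarith [Finset.sum_nonneg (s := U \ Um) (f := fun k => q l k ^ 2)
        (fun k _ => by positivity)]
    linarith

/-- Merging the last two blocks of an `(N+2)`-decomposition. -/
lemma merge_step {B : Finset ιB} (hP : 0 < P) (hN0 : 0 < N0) (N : ℕ)
    (UF : Fin (N + 2) → Finset ιU) (BF : Fin (N + 2) → Finset ιB)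
    (hD : IsDecomp U B UF BF) :
    ∃ (UF' : Fin (N + 1) → Finset ιU) (BF' : Fin (N + 1) → Finset ιB),
      IsDecomp U B UF' BF' ∧
        ∑ m, Csub U q P N0 (BF m) (UF m) ≤ ∑ m, Csub U q P N0 (BF' m) (UF' m) := by
  obtain ⟨hUd, hUu, hBd, hBu⟩ := hD
  set c : Fin (N + 2) := Fin.castSucc (Fin.last N) with hc
  set t : Fin (N + 2) := Fin.last (N + 1) with ht
  have hct : c ≠ t := (Fin.castSucc_lt_last _).ne
  refine ⟨fun i => if i = Fin.last N then UF c ∪ UF t else UF i.castSucc,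
          fun i => if i = Fin.last N then BF c ∪ BF t else BF i.castSucc, ⟨?_, ?_, ?_, ?_⟩, ?_⟩
  · -- UE disjointness
    intro i j hij
    have hinj : ∀ (a b : Fin (N+1)), a ≠ b → (a.castSucc : Fin (N+2)) ≠ b.castSucc :=
      fun a b hab h => hab (Fin.castSucc_injective _ h)
    dsimp only
    by_cases hi : i = Fin.last N <;> by_cases hj : j = Fin.last N
    · exact absurd (hi.trans hj.symm) hij
    · rw [if_pos hi, if_neg hj, Finset.disjoint_union_left]
      subst hi
      exact ⟨hUd _ _ (hinj _ _ (Ne.symm hj)), hUd _ _ (fun h => (Fin.castSucc_lt_last j).ne h.symm)⟩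
    · rw [if_neg hi, if_pos hj, Finset.disjoint_union_right]
      subst hj
      exact ⟨hUd _ _ (hinj _ _ hi), hUd _ _ (Fin.castSucc_lt_last i).ne⟩
    · rw [if_neg hi, if_neg hj]
      exact hUd _ _ (hinj _ _ hij)
  · -- UE union
    have hsub : ∀ j, UF j ⊆ U := fun j => hUu ▸ Finset.subset_biUnion_of_mem UF (mem_univ j)
    apply Finset.Subset.antisymm
    · refine Finset.biUnion_subset.mpr fun i _ => ?_
      by_cases hi : i = Fin.last N
      · rw [if_pos hi]; exact Finset.union_subset (hsub c) (hsub t)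
      · rw [if_neg hi]; exact hsub _
    · intro x hx
      rw [← hUu] at hx
      obtain ⟨j, _, hj⟩ := Finset.mem_biUnion.mp hx
      refine Finset.mem_biUnion.mpr ?_
      induction j using Fin.lastCases with
      | last =>
        exact ⟨Fin.last N, mem_univ _, by rw [if_pos rfl]; exact Finset.mem_union_right _ hj⟩
      | cast i =>
        by_cases hi : i = Fin.last N
        · subst hi
          exact ⟨Fin.last N, mem_univ _, by rw [if_pos rfl]; exact Finset.mem_union_left _ hj⟩
        · exact ⟨i, mem_univ _, by rw [if_neg hi]; exact hj⟩
  · -- BS disjointness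
    intro i j hij
    have hinj : ∀ (a b : Fin (N+1)), a ≠ b → (a.castSucc : Fin (N+2)) ≠ b.castSucc :=
      fun a b hab h => hab (Fin.castSucc_injective _ h)
    dsimp only
    by_cases hi : i = Fin.last N <;> by_cases hj : j = Fin.last N
    · exact absurd (hi.trans hj.symm) hij
    · rw [if_pos hi, if_neg hj, Finset.disjoint_union_left]
      subst hi
      exact ⟨hBd _ _ (hinj _ _ (Ne.symm hj)), hBd _ _ (fun h => (Fin.castSucc_lt_last j).ne h.symm)⟩
    · rw [if_neg hi, if_pos hj, Finset.disjoint_union_right]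
      subst hj
      exact ⟨hBd _ _ (hinj _ _ hi), hBd _ _ (Fin.castSucc_lt_last i).ne⟩
    · rw [if_neg hi, if_neg hj]
      exact hBd _ _ (hinj _ _ hij)
  · -- BS union
    have hsub : ∀ j, BF j ⊆ B := fun j => hBu ▸ Finset.subset_biUnion_of_mem BF (mem_univ j)
    apply Finset.Subset.antisymm
    · refine Finset.biUnion_subset.mpr fun i _ => ?_
      by_cases hi : i = Fin.last N
      · rw [if_pos hi]; exact Finset.union_subset (hsub c) (hsub t)
      · rw [if_neg hi]; exact hsub _
    · intro x hx
      rw [← hBu] at hx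
      obtain ⟨j, _, hj⟩ := Finset.mem_biUnion.mp hx
      refine Finset.mem_biUnion.mpr ?_
      induction j using Fin.lastCases with
      | last =>
        exact ⟨Fin.last N, mem_univ _, by rw [if_pos rfl]; exact Finset.mem_union_right _ hj⟩
      | cast i =>
        by_cases hi : i = Fin.last N
        · subst hi
          exact ⟨Fin.last N, mem_univ _, by rw [if_pos rfl]; exact Finset.mem_union_left _ hj⟩
        · exact ⟨i, mem_univ _, by rw [if_neg hi]; exact hj⟩
  · -- sum inequality
    rw [Fin.sum_univ_castSucc (n := N + 1), Fin.sum_univ_castSucc (n := N),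
        Fin.sum_univ_castSucc (n := N)]
    have hlast : ∀ i : Fin N, (i.castSucc : Fin (N + 1)) ≠ Fin.last N :=
      fun i => (Fin.castSucc_lt_last i).ne
    have heq : ∀ i : Fin N,
        Csub U q P N0 (BF (i.castSucc.castSucc)) (UF (i.castSucc.castSucc)) =
        Csub U q P N0 (if i.castSucc = Fin.last N then BF c ∪ BF t else BF i.castSucc.castSucc)
          (if i.castSucc = Fin.last N then UF c ∪ UF t else UF i.castSucc.castSucc) := by
      intro i; rw [if_neg (hlast i), if_neg (hlast i)]
    rw [Finset.sum_congr rfl (fun i _ => heq i)]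
    simp only [if_pos rfl, if_true]
    have hmerge : Csub U q P N0 (BF c) (UF c) + Csub U q P N0 (BF t) (UF t)
        ≤ Csub U q P N0 (BF c ∪ BF t) (UF c ∪ UF t) := by
      rw [csub_union_B _ (hBd c t hct)]
      have h1 : Csub U q P N0 (BF c) (UF c) ≤ Csub U q P N0 (BF c) (UF c ∪ UF t) :=
        csub_mono_U hP hN0 _ Finset.subset_union_left
      have h2 : Csub U q P N0 (BF t) (UF t) ≤ Csub U q P N0 (BF t) (UF c ∪ UF t) :=
        csub_mono_U hP hN0 _ Finset.subset_union_right
      linarith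
    linarith

end Helpers

/-- Theorem 2: for every decomposition into `M+1` subnetworks there is a decomposition
into `M` subnetworks with at least the same sum capacity; consequently the maximum
achievable sum capacity over decompositions into `M+1` subnetworks is no larger than
the maximum over decompositions into `M` subnetworks. -/
theorem sum_capacity_antitone_in_M {ιU ιB : Type*} [DecidableEq ιU] [DecidableEq ιB]
    (U : Finset ιU) (B : Finset ιB) (K L : ℕ) (hK : U.card = K) (hL : B.card = L)
    (q : ιB → ιU → ℝ) (hq : ∀ l k, 0 < q l k)
    (P N0 : ℝ) (hP : 0 < P) (hN0 : 0 < N0)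
    (M : ℕ) (hM : 1 ≤ M) :
    (∀ (UF : Fin (M + 1) → Finset ιU) (BF : Fin (M + 1) → Finset ιB),
      IsDecomp U B UF BF →
        ∃ (UF' : Fin M → Finset ιU) (BF' : Fin M → Finset ιB),
          IsDecomp U B UF' BF' ∧
            ∑ m, Csub U q P N0 (BF m) (UF m) ≤ ∑ m, Csub U q P N0 (BF' m) (UF' m)) ∧
    sSup {c : ℝ | ∃ (UF : Fin (M + 1) → Finset ιU) (BF : Fin (M + 1) → Finset ιB),
        IsDecomp U B UF BF ∧ c = ∑ m, Csub U q P N0 (BF m) (UF m)} ≤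
      sSup {c : ℝ | ∃ (UF' : Fin M → Finset ιU) (BF' : Fin M → Finset ιB),
        IsDecomp U B UF' BF' ∧ c = ∑ m, Csub U q P N0 (BF' m) (UF' m)} := by
  obtain ⟨N, rfl⟩ : ∃ N, M = N + 1 := ⟨M - 1, (Nat.succ_pred_eq_of_pos hM).symm⟩
  have hstep := fun UF BF hD => merge_step (U := U) (B := B) (q := q) hP hN0 N UF BF hD
  refine ⟨hstep, ?_⟩
  set A' : Set ℝ := {c : ℝ | ∃ (UF' : Fin (N + 1) → Finset ιU) (BF' : Fin (N + 1) → Finset ιB),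
      IsDecomp U B UF' BF' ∧ c = ∑ m, Csub U q P N0 (BF' m) (UF' m)} with hA'
  -- trivial decomposition witnessing nonemptiness of A'
  have htriv : IsDecomp U B (fun i : Fin (N + 1) => if i = 0 then U else ∅)
      (fun i : Fin (N + 1) => if i = 0 then B else ∅) := by
    refine ⟨?_, ?_, ?_, ?_⟩
    · intro i j hij
      by_cases hi : i = 0 <;> by_cases hj : j = 0 <;>
        simp_all [Finset.disjoint_empty_left, Finset.disjoint_empty_right]
    · apply Finset.Subset.antisymm
      · refine Finset.biUnion_subset.mpr fun i _ => ?_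
        by_cases hi : i = 0 <;> simp [hi]
      · intro x hx
        exact Finset.mem_biUnion.mpr ⟨0, mem_univ _, by simpa⟩
    · intro i j hij
      by_cases hi : i = 0 <;> by_cases hj : j = 0 <;>
        simp_all [Finset.disjoint_empty_left, Finset.disjoint_empty_right]
    · apply Finset.Subset.antisymm
      · refine Finset.biUnion_subset.mpr fun i _ => ?_
        by_cases hi : i = 0 <;> simp [hi]
      · intro x hx
        exact Finset.mem_biUnion.mpr ⟨0, mem_univ _, by simpa⟩
  have hc0 : (∑ m : Fin (N + 1), Csub U q P N0
      ((fun i : Fin (N + 1) => if i = 0 then B else ∅) m)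
      ((fun i : Fin (N + 1) => if i = 0 then U else ∅) m)) ∈ A' :=
    ⟨_, _, htriv, rfl⟩
  have hc0nn : (0 : ℝ) ≤ ∑ m : Fin (N + 1), Csub U q P N0
      ((fun i : Fin (N + 1) => if i = 0 then B else ∅) m)
      ((fun i : Fin (N + 1) => if i = 0 then U else ∅) m) :=
    Finset.sum_nonneg fun m _ => csub_nonneg hP hN0 _ _
  -- bound for A'
  have hbdd : BddAbove A' := by
    refine ⟨∑ l ∈ B, Real.logb 2 (1 + P * (∑ k ∈ U, q l k ^ 2) / N0), ?_⟩
    rintro c ⟨UF', BF', ⟨hUd, hUu, hBd, hBu⟩, rfl⟩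
    have hsub : ∀ m, UF' m ⊆ U := fun m => hUu ▸ Finset.subset_biUnion_of_mem UF' (mem_univ m)
    calc ∑ m, Csub U q P N0 (BF' m) (UF' m)
        ≤ ∑ m, ∑ l ∈ BF' m, Real.logb 2 (1 + P * (∑ k ∈ U, q l k ^ 2) / N0) :=
          Finset.sum_le_sum fun m _ => csub_le_bound hP hN0 _ (hsub m)
      _ = ∑ l ∈ Finset.univ.biUnion BF', Real.logb 2 (1 + P * (∑ k ∈ U, q l k ^ 2) / N0) :=
          (Finset.sum_biUnion (fun i _ j _ hij => hBd i j hij)).symm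
      _ = ∑ l ∈ B, Real.logb 2 (1 + P * (∑ k ∈ U, q l k ^ 2) / N0) := by rw [hBu]
  have hsup_nn : 0 ≤ sSup A' := le_trans hc0nn (le_csSup hbdd hc0)
  refine Real.sSup_le ?_ hsup_nn
  rintro c ⟨UF, BF, hD, rfl⟩
  obtain ⟨UF', BF', hD', hle⟩ := hstep UF BF hD
  exact le_trans hle (le_csSup hbdd ⟨UF', BF', hD', rfl⟩)
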